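/- Let (ξ₁, ξ₂) ~ N((πβ, π)', Σ) with Σ fixed and positive definite. Define β̂_U = τ̂(ξ₂,σ₂²)(ξ₁ − (σ₁₂/σ₂²)ξ₂) + σ₁₂/σ₂² and β̂_{2SLS} = ξ₁/ξ₂. Then as π → ∞ (with β, Σ fixed), π·(β̂_U − β̂_{2SLS}) → 0 in probability. -/

import Mathlib

open MeasureTheory ProbabilityTheory Filter

/-- Standard normal density `φ`. -/
noncomputable def stdPDF (x : ℝ) : ℝ :=
  (Real.sqrt (2 * Real.pi))⁻¹ * Real.exp (-(x ^ 2) / 2)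

/-- Standard normal CDF `Φ`. -/
noncomputable def stdCDF (x : ℝ) : ℝ := ∫ t in Set.Iic x, stdPDF t

/-- Mills-ratio estimator `τ̂(x, σ²) = (1/σ)(1 − Φ(x/σ))/φ(x/σ)`. -/
noncomputable def millsTau (σ x : ℝ) : ℝ :=
  (1 / σ) * (1 - stdCDF (x / σ)) / stdPDF (x / σ)

open Set

lemma stdPDF_eq : stdPDF = fun x : ℝ =>
    (Real.sqrt (2 * Real.pi))⁻¹ * Real.exp (-(1/2) * x^2) := by
  funext x; unfold stdPDF; congr 1; ring_nf

lemma stdPDF_pos (x : ℝ) : 0 < stdPDF x := by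
  have h : (0:ℝ) < 2 * Real.pi := by positivity
  unfold stdPDF
  positivity

lemma continuous_stdPDF : Continuous stdPDF := by
  unfold stdPDF; fun_prop

lemma integrable_stdPDF : Integrable stdPDF := by
  rw [stdPDF_eq]
  exact (integrable_exp_neg_mul_sq (by norm_num : (0:ℝ) < 1/2)).const_mul _

lemma integral_stdPDF : ∫ x, stdPDF x = 1 := by
  have h2π : (0:ℝ) < 2 * Real.pi := by positivity
  rw [stdPDF_eq, MeasureTheory.integral_const_mul, integral_gaussian,
    show Real.pi / (1/2) = 2 * Real.pi by ring,
    inv_mul_cancel₀ (Real.sqrt_ne_zero'.mpr h2π)]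

lemma monotone_stdCDF : Monotone stdCDF := by
  intro x y hxy
  exact setIntegral_mono_set integrable_stdPDF.integrableOn
    (Eventually.of_forall fun s => (stdPDF_pos s).le)
    (HasSubset.Subset.eventuallyLE (Set.Iic_subset_Iic.mpr hxy))

lemma measurable_millsTau (σ : ℝ) : Measurable (millsTau σ) := by
  have hC : Measurable stdCDF := monotone_stdCDF.measurable
  have h2 : Measurable fun x : ℝ => x / σ := measurable_id.div_const σ
  exact ((measurable_const.mul ((measurable_const.sub (hC.comp h2)))).div
    (continuous_stdPDF.measurable.comp h2))

lemma one_sub_stdCDF (t : ℝ) : 1 - stdCDF t = ∫ x in Set.Ioi t, stdPDF x := by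
  have h := intervalIntegral.integral_Iic_add_Ioi (b := t) integrable_stdPDF.integrableOn
    integrable_stdPDF.integrableOn
  rw [integral_stdPDF] at h
  unfold stdCDF
  linarith

lemma hasDerivAt_stdPDF (x : ℝ) : HasDerivAt stdPDF (-x * stdPDF x) x := by
  have h1 : HasDerivAt (fun y : ℝ => -(y^2)/2) (-x) x := by
    have := ((hasDerivAt_pow 2 x).neg.div_const 2)
    refine this.congr_deriv ?_
    norm_num; ring
  have h3 := (h1.exp).const_mul (Real.sqrt (2 * Real.pi))⁻¹
  refine (show HasDerivAt stdPDF _ x from h3).congr_deriv ?_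
  unfold stdPDF; ring

lemma tendsto_stdPDF_atTop : Tendsto stdPDF atTop (nhds 0) := by
  have h1 : Tendsto (fun x : ℝ => -(x^2)/2) atTop atBot := by
    apply Tendsto.atBot_div_const (by norm_num)
    exact tendsto_neg_atTop_atBot.comp (tendsto_pow_atTop two_ne_zero)
  have h2 : Tendsto (fun x : ℝ => Real.exp (-(x^2)/2)) atTop (nhds 0) :=
    Real.tendsto_exp_atBot.comp h1
  have h3 := h2.const_mul (Real.sqrt (2 * Real.pi))⁻¹
  rw [mul_zero] at h3
  exact h3

lemma tendsto_mul_stdPDF_atTop : Tendsto (fun x => x * stdPDF x) atTop (nhds 0) := by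
  have h := rpow_mul_exp_neg_mul_sq_isLittleO_exp_neg (by norm_num : (0:ℝ) < 1/2) 1
  have hg : Tendsto (fun x : ℝ => Real.exp (-(1/2) * x)) atTop (nhds 0) := by
    refine Real.tendsto_exp_atBot.comp ?_
    exact (tendsto_id (α := ℝ)).const_mul_atTop_of_neg (by norm_num)
  have h2 : Tendsto (fun x : ℝ => x * Real.exp (-(1/2) * x^2)) atTop (nhds 0) := by
    have := h.isBigO.trans_tendsto hg
    refine this.congr' ?_
    filter_upwards [eventually_ge_atTop (0:ℝ)] with x hx
    rw [Real.rpow_one]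
  have h3 := h2.const_mul (Real.sqrt (2 * Real.pi))⁻¹
  rw [mul_zero] at h3
  refine h3.congr fun x => ?_
  unfold stdPDF; ring_nf

lemma integrable_mul_stdPDF : Integrable (fun x => x * stdPDF x) := by
  rw [stdPDF_eq]
  have h := (integrable_mul_exp_neg_mul_sq (by norm_num : (0:ℝ) < 1/2)).const_mul
    (Real.sqrt (2 * Real.pi))⁻¹
  exact h.congr (Eventually.of_forall fun x => by ring)

lemma integrable_sq_mul_stdPDF : Integrable (fun x => x^2 * stdPDF x) := by
  rw [stdPDF_eq]
  have h := (integrable_rpow_mul_exp_neg_mul_sq (by norm_num : (0:ℝ) < 1/2)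
    (s := 2) (by norm_num)).const_mul (Real.sqrt (2 * Real.pi))⁻¹
  refine h.congr (Eventually.of_forall fun x => ?_)
  have hx : (x:ℝ) ^ (2:ℝ) = x ^ (2:ℕ) := by
    rw [show ((2:ℝ)) = ((2:ℕ):ℝ) by norm_num, Real.rpow_natCast]
  simp only [hx]
  ring

lemma integral_Ioi_mul_stdPDF (t : ℝ) : ∫ s in Set.Ioi t, s * stdPDF s = stdPDF t := by
  have h := integral_Ioi_of_hasDerivAt_of_tendsto' (f := fun s => -stdPDF s)
    (f' := fun s => s * stdPDF s) (a := t) (m := 0)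
    (fun x _ => (hasDerivAt_stdPDF x).neg.congr_deriv (by show _ = x * stdPDF x; ring))
    integrable_mul_stdPDF.integrableOn
    (by simpa using tendsto_stdPDF_atTop.neg)
  simpa using h

lemma integral_Ioi_sq_mul_stdPDF (t : ℝ) :
    ∫ s in Set.Ioi t, s^2 * stdPDF s = t * stdPDF t + (1 - stdCDF t) := by
  have h := integral_Ioi_of_hasDerivAt_of_tendsto' (f := fun s => -(s * stdPDF s))
    (f' := fun s => (s^2 - 1) * stdPDF s) (a := t) (m := 0)
    (fun x _ => by
      have := ((hasDerivAt_id x).mul (hasDerivAt_stdPDF x)).neg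
      refine this.congr_deriv ?_
      simp; ring)
    ((integrable_sq_mul_stdPDF.sub integrable_stdPDF).congr
      (Eventually.of_forall fun x => by simp only [Pi.sub_apply]; ring)).integrableOn
    (by simpa using tendsto_mul_stdPDF_atTop.neg)
  have h2 : ∫ s in Set.Ioi t, (s^2 - 1) * stdPDF s
      = (∫ s in Set.Ioi t, s^2 * stdPDF s) - ∫ s in Set.Ioi t, stdPDF s := by
    rw [← integral_sub integrable_sq_mul_stdPDF.integrableOn integrable_stdPDF.integrableOn]
    congr 1 with s
    ring
  rw [h2] at h
  rw [← one_sub_stdCDF] at h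
  simp at h
  linarith

lemma tail_le {t : ℝ} (ht : 0 < t) : 1 - stdCDF t ≤ stdPDF t / t := by
  have hmono : ∫ x in Set.Ioi t, stdPDF x ≤ ∫ s in Set.Ioi t, (1/t) * (s * stdPDF s) := by
    refine setIntegral_mono_on integrable_stdPDF.integrableOn
      ((integrable_mul_stdPDF.const_mul (1/t)).integrableOn) measurableSet_Ioi
      fun s hs => ?_
    rw [Set.mem_Ioi] at hs
    have h1 := stdPDF_pos s
    rw [show (1/t) * (s * stdPDF s) = (s/t) * stdPDF s by ring]
    exact le_mul_of_one_le_left h1.le ((one_le_div ht).mpr hs.le)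
  rw [MeasureTheory.integral_const_mul, integral_Ioi_mul_stdPDF] at hmono
  rw [one_sub_stdCDF]
  calc ∫ x in Set.Ioi t, stdPDF x ≤ 1/t * stdPDF t := hmono
    _ = stdPDF t / t := by ring

lemma tail_ge {t : ℝ} (ht : 0 < t) :
    stdPDF t / t - (1 - stdCDF t) / t^2 ≤ 1 - stdCDF t := by
  have hint1 : IntegrableOn (fun s => (s - t) * stdPDF s) (Set.Ioi t) := by
    refine ((integrable_mul_stdPDF.sub (integrable_stdPDF.const_mul t)).congr
      (Eventually.of_forall fun s => ?_)).integrableOn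
    simp only [Pi.sub_apply]; ring
  have hint2 : IntegrableOn (fun s => (s^2/t - s) * stdPDF s) (Set.Ioi t) := by
    refine (((integrable_sq_mul_stdPDF.const_mul (1/t)).sub integrable_mul_stdPDF).congr
      (Eventually.of_forall fun s => ?_)).integrableOn
    simp only [Pi.sub_apply]; ring
  have hmono : ∫ s in Set.Ioi t, (s - t) * stdPDF s
      ≤ ∫ s in Set.Ioi t, (s^2/t - s) * stdPDF s := by
    refine setIntegral_mono_on hint1 hint2 measurableSet_Ioi fun s hs => ?_
    rw [Set.mem_Ioi] at hs
    have h1 := stdPDF_pos s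
    have h2 : s^2/t - s - (s - t) = (s - t)^2 / t := by field_simp
    nlinarith [div_nonneg (sq_nonneg (s - t)) ht.le]
  have e1 : ∫ s in Set.Ioi t, (s - t) * stdPDF s
      = stdPDF t - t * (1 - stdCDF t) := by
    rw [show (fun s => (s - t) * stdPDF s) = fun s => s * stdPDF s - t * stdPDF s by
      funext s; ring]
    rw [integral_sub integrable_mul_stdPDF.integrableOn
      ((integrable_stdPDF.const_mul t).integrableOn),
      integral_Ioi_mul_stdPDF, MeasureTheory.integral_const_mul, ← one_sub_stdCDF]
  have e2 : ∫ s in Set.Ioi t, (s^2/t - s) * stdPDF s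
      = (t * stdPDF t + (1 - stdCDF t))/t - stdPDF t := by
    rw [show (fun s => (s^2/t - s) * stdPDF s) = fun s => (1/t) * (s^2 * stdPDF s) - s * stdPDF s by
      funext s; ring]
    rw [integral_sub ((integrable_sq_mul_stdPDF.const_mul (1/t)).integrableOn)
      integrable_mul_stdPDF.integrableOn,
      MeasureTheory.integral_const_mul, integral_Ioi_sq_mul_stdPDF, integral_Ioi_mul_stdPDF]
    ring
  have e3 : (t * stdPDF t + (1 - stdCDF t)) / t - stdPDF t = (1 - stdCDF t) / t := by
    field_simp
    ring
  rw [e1, e2, e3] at hmono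
  -- hmono : stdPDF t - t * (1 - stdCDF t) ≤ (1 - stdCDF t) / t
  have h1 : (stdPDF t - t * (1 - stdCDF t)) * t ≤ 1 - stdCDF t := by
    rw [← le_div_iff₀ ht]; exact hmono
  have ht2 : (0:ℝ) < t ^ 2 := by positivity
  have hgoal : t * stdPDF t - (1 - stdCDF t) ≤ t ^ 2 * (1 - stdCDF t) := by nlinarith [h1]
  calc stdPDF t / t - (1 - stdCDF t) / t ^ 2
      = (t * stdPDF t - (1 - stdCDF t)) / t ^ 2 := by field_simp
    _ ≤ t ^ 2 * (1 - stdCDF t) / t ^ 2 := by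
        exact div_le_div_of_nonneg_right hgoal ht2.le |>.trans_eq rfl
    _ = 1 - stdCDF t := by field_simp

lemma one_sub_stdCDF_nonneg (t : ℝ) : 0 ≤ 1 - stdCDF t := by
  rw [one_sub_stdCDF]
  exact setIntegral_nonneg measurableSet_Ioi fun s _ => (stdPDF_pos s).le

lemma abs_millsTau_sub {σ x : ℝ} (hσ : 0 < σ) (hx : 0 < x) :
    |millsTau σ x - 1 / x| ≤ σ ^ 2 / x ^ 3 := by
  set t := x / σ with htdef
  have ht : 0 < t := div_pos hx hσ
  have hφ := stdPDF_pos t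
  have hB0 := one_sub_stdCDF_nonneg t
  have key1 : (1 - stdCDF t) * t ≤ stdPDF t := by
    have := tail_le ht
    rw [le_div_iff₀ ht] at this
    linarith
  have key2 : stdPDF t * t ≤ (1 - stdCDF t) + (1 - stdCDF t) * t ^ 2 := by
    have h := tail_ge ht
    have h' : stdPDF t / t ≤ (1 - stdCDF t) + (1 - stdCDF t) / t ^ 2 := by linarith
    have h2 := mul_le_mul_of_nonneg_right h' (le_of_lt (by positivity : (0:ℝ) < t ^ 2))
    calc stdPDF t * t = (stdPDF t / t) * t ^ 2 := by field_simp
      _ ≤ ((1 - stdCDF t) + (1 - stdCDF t) / t ^ 2) * t ^ 2 := h2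
      _ = (1 - stdCDF t) + (1 - stdCDF t) * t ^ 2 := by field_simp; ring
  have hxt : x = σ * t := by rw [htdef]; field_simp
  have hRle : (1 - stdCDF t) / stdPDF t ≤ 1 / t := by
    rw [div_le_div_iff₀ hφ ht]
    linarith
  have h3 : 1 / t - (1 - stdCDF t) / stdPDF t ≤ 1 / t ^ 3 := by
    rw [div_sub_div _ _ (ne_of_gt ht) (ne_of_gt hφ),
      div_le_div_iff₀ (by positivity) (by positivity)]
    nlinarith [mul_le_mul_of_nonneg_right key2 (mul_nonneg ht.le ht.le),
      mul_le_mul_of_nonneg_right key1 (mul_nonneg ht.le ht.le)]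
  have eq1 : 1 / x = (1 / σ) * (1 / t) := by rw [hxt]; field_simp
  have eq2 : σ ^ 2 / x ^ 3 = (1 / σ) * (1 / t ^ 3) := by
    rw [hxt]; field_simp
  have eq3 : millsTau σ x = (1 / σ) * ((1 - stdCDF t) / stdPDF t) := by
    unfold millsTau
    rw [← htdef, mul_div_assoc]
  rw [eq3, eq1, eq2, ← mul_sub, abs_mul, abs_of_pos (by positivity : (0:ℝ) < 1 / σ)]
  refine mul_le_mul_of_nonneg_left ?_ (by positivity)
  rw [abs_le]
  constructor
  · linarith
  · have : (0:ℝ) ≤ 1 / t ^ 3 := by positivity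
    linarith

lemma aux_tendsto (σ a b d : ℝ) (hσ : 0 < σ) :
    Tendsto (fun π : ℝ => (π * (b * π + d)) * (millsTau σ (π + a) - 1 / (π + a)))
      atTop (nhds 0) := by
  have hden : Tendsto (fun π : ℝ => π + a) atTop atTop :=
    tendsto_atTop_add_const_right _ a tendsto_id
  have hr : Tendsto (fun π : ℝ => 1 / (π + a)) atTop (nhds 0) :=
    tendsto_const_nhds.div_atTop hden
  have hq : Tendsto (fun π : ℝ => π / (π + a)) atTop (nhds 1) := by
    have ha' : Tendsto (fun π : ℝ => a / (π + a)) atTop (nhds 0) :=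
      tendsto_const_nhds.div_atTop hden
    have h1 : Tendsto (fun π : ℝ => 1 - a / (π + a)) atTop (nhds (1 - 0)) :=
      tendsto_const_nhds.sub ha'
    rw [sub_zero] at h1
    refine h1.congr' ?_
    filter_upwards [eventually_gt_atTop (-a)] with π hπ
    have hne : π + a ≠ 0 := by linarith
    field_simp
    ring
  set F : ℝ → ℝ := fun π => σ ^ 2 *
    (|b| * (π / (π + a)) ^ 2 * (1 / (π + a)) + |d| * (π / (π + a)) * (1 / (π + a)) ^ 2)
    with hF
  have hFt : Tendsto F atTop (nhds 0) := by
    have : Tendsto F atTop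
        (nhds (σ ^ 2 * (|b| * 1 ^ 2 * 0 + |d| * 1 * 0 ^ 2))) := by
      exact tendsto_const_nhds.mul
        (((tendsto_const_nhds.mul (hq.pow 2)).mul hr).add
          ((tendsto_const_nhds.mul hq).mul (hr.pow 2)))
    simpa using this
  refine squeeze_zero_norm' ?_ hFt
  filter_upwards [eventually_ge_atTop (|a| + 1)] with π hπ
  have ha1 : -|a| ≤ a := neg_abs_le a
  have hπ0 : 0 < π := by linarith [abs_nonneg a]
  have hξ : 0 < π + a := by linarith
  have hbd : |π * (b * π + d)| ≤ π * (|b| * π + |d|) := by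
    rw [abs_mul, abs_of_pos hπ0]
    refine mul_le_mul_of_nonneg_left ?_ hπ0.le
    calc |b * π + d| ≤ |b * π| + |d| := abs_add_le _ _
      _ = |b| * π + |d| := by rw [abs_mul, abs_of_pos hπ0]
  have hmills := abs_millsTau_sub hσ hξ
  have hFeq : F π = (π * (|b| * π + |d|)) * (σ ^ 2 / (π + a) ^ 3) := by
    rw [hF]
    field_simp
  rw [Real.norm_eq_abs, abs_mul, hFeq]
  refine mul_le_mul hbd hmills (abs_nonneg _) ?_
  positivity

/-- π·(β̂_U − β̂_2SLS) → 0 in probability as π → ∞. -/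
theorem stmt9 {Ω : Type*} [MeasurableSpace Ω] (P : Measure Ω) [IsProbabilityMeasure P]
    (Z₁ Z₂ : Ω → ℝ) (hm₁ : Measurable Z₁) (hm₂ : Measurable Z₂)
    (hind : IndepFun Z₁ Z₂ P)
    (hZ₁ : P.map Z₁ = gaussianReal 0 1) (hZ₂ : P.map Z₂ = gaussianReal 0 1)
    (β σ₁ σ₁₂ σ₂ : ℝ) (hσ₂ : 0 < σ₂)
    (hpd : σ₁₂ ^ 2 < σ₁ ^ 2 * σ₂ ^ 2)
    (ξ₁ : ℝ → Ω → ℝ) (ξ₂ : ℝ → Ω → ℝ)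
    (hξ₂ : ∀ π, ξ₂ π = fun ω => π + σ₂ * Z₂ ω)
    (hξ₁ : ∀ π, ξ₁ π = fun ω => π * β + (σ₁₂ / σ₂) * Z₂ ω
        + Real.sqrt (σ₁ ^ 2 - σ₁₂ ^ 2 / σ₂ ^ 2) * Z₁ ω)
    (ε : ℝ) (hε : 0 < ε) :
    Tendsto (fun π : ℝ =>
        P {ω | ε ≤ |π * ((millsTau σ₂ (ξ₂ π ω) * (ξ₁ π ω - (σ₁₂ / σ₂ ^ 2) * ξ₂ π ω)
            + σ₁₂ / σ₂ ^ 2) - ξ₁ π ω / ξ₂ π ω)|})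
      atTop (nhds 0) := by
  have hσ₂' : σ₂ ≠ 0 := ne_of_gt hσ₂
  set s : ℝ := Real.sqrt (σ₁ ^ 2 - σ₁₂ ^ 2 / σ₂ ^ 2) with hs
  set c : ℝ := σ₁₂ / σ₂ ^ 2 with hc
  set X : ℝ → Ω → ℝ := fun π ω =>
    π * ((millsTau σ₂ (ξ₂ π ω) * (ξ₁ π ω - c * ξ₂ π ω) + c) - ξ₁ π ω / ξ₂ π ω) with hX
  -- pointwise convergence for every ω
  have hpt : ∀ ω, Tendsto (fun π => X π ω) atTop (nhds 0) := by
    intro ω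
    refine (aux_tendsto σ₂ (σ₂ * Z₂ ω) (β - c) (s * Z₁ ω) hσ₂).congr' ?_
    filter_upwards [eventually_gt_atTop (σ₂ * |Z₂ ω|)] with π hπ
    have hz : -(σ₂ * |Z₂ ω|) ≤ σ₂ * Z₂ ω := by
      have := neg_abs_le (Z₂ ω)
      nlinarith [abs_nonneg (Z₂ ω)]
    have hξpos : 0 < π + σ₂ * Z₂ ω := by linarith
    have hne : π + σ₂ * Z₂ ω ≠ 0 := ne_of_gt hξpos
    rw [hX]
    simp only [hξ₁ π, hξ₂ π]
    have h1 : π * β + (σ₁₂ / σ₂) * Z₂ ω + s * Z₁ ω - c * (π + σ₂ * Z₂ ω)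
        = (β - c) * π + s * Z₁ ω := by
      rw [hc]; field_simp; ring
    have h2 : π * β + (σ₁₂ / σ₂) * Z₂ ω + s * Z₁ ω
        = (β - c) * π + s * Z₁ ω + c * (π + σ₂ * Z₂ ω) := by linarith
    rw [h1, h2]
    generalize millsTau σ₂ (π + σ₂ * Z₂ ω) = τ
    generalize (β - c) * π + s * Z₁ ω = A
    generalize hgen : π + σ₂ * Z₂ ω = xi at hne ⊢
    field_simp
    ring
  -- measurability
  have hmeas : ∀ π : ℝ, AEStronglyMeasurable (X π) P := by
    intro π
    have m2 : Measurable (ξ₂ π) := by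
      rw [hξ₂ π]; exact measurable_const.add (hm₂.const_mul σ₂)
    have m1 : Measurable (ξ₁ π) := by
      rw [hξ₁ π]
      exact (measurable_const.add (hm₂.const_mul _)).add (hm₁.const_mul _)
    have : Measurable (X π) := by
      rw [hX]
      refine (((((measurable_millsTau σ₂).comp m2).mul
        (m1.sub (m2.const_mul c))).add measurable_const).sub (m1.div m2)).const_mul π
    exact this.aestronglyMeasurable
  rw [tendsto_iff_seq_tendsto]
  intro u hu
  have key : TendstoInMeasure P (fun n => X (u n)) atTop (fun _ => (0:ℝ)) :=
    tendstoInMeasure_of_tendsto_ae (fun n => hmeas (u n))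
      (ae_of_all _ fun ω => (hpt ω).comp hu)
  have h := key (ENNReal.ofReal ε) (ENNReal.ofReal_pos.mpr hε)
  refine h.congr fun n => ?_
  congr 1
  ext ω
  simp only [hX, Set.mem_setOf_eq, edist_dist, Real.dist_eq, sub_zero,
    ENNReal.ofReal_le_ofReal_iff (abs_nonneg _)]
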